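/- The set of holes of an affine semigroup Q, i.e. (ZQ ∩ R_{≥0}Q) \ Q, is a finite union of translates of faces of Q, that is, a finite union of sets of the form a + NF with F a face of Q. -/

import Mathlib

open scoped BigOperators

noncomputable section

def IsFace {d : ℕ} (Q F : AddSubmonoid (Fin d → ℤ)) : Prop :=
  F ≤ Q ∧ ∀ a b : Fin d → ℤ, a ∈ Q → b ∈ Q → (a + b ∈ F ↔ a ∈ F ∧ b ∈ F)

def transSet {d : ℕ} (a : Fin d → ℤ) (F : AddSubmonoid (Fin d → ℤ)) : Set (Fin d → ℤ) :=
  {x | ∃ f ∈ F, x = a + f}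

def castR {d : ℕ} (v : Fin d → ℤ) : Fin d → ℝ := fun i => (v i : ℝ)

def realCone {d : ℕ} (S : Set (Fin d → ℤ)) : Set (Fin d → ℝ) :=
  {x | ∃ (t : Finset (Fin d → ℤ)) (c : (Fin d → ℤ) → ℝ),
    (t : Set (Fin d → ℤ)) ⊆ S ∧ (∀ v ∈ t, 0 ≤ c v) ∧ x = ∑ v ∈ t, c v • castR v}

namespace HolesAux

variable {d : ℕ}

/-- Every element of the monoid closure of a finite set is an `ℕ`-combination. -/
lemma mem_closure_rep {A : Finset (Fin d → ℤ)} {x : Fin d → ℤ}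
    (hx : x ∈ AddSubmonoid.closure (A : Set (Fin d → ℤ))) :
    ∃ c : (Fin d → ℤ) → ℕ, x = ∑ v ∈ A, c v • v := by
  classical
  induction hx using AddSubmonoid.closure_induction with
  | mem v hv =>
      have hvA : v ∈ A := hv
      refine ⟨fun w => if w = v then 1 else 0, ?_⟩
      show v = ∑ w ∈ A, (if w = v then 1 else 0) • w
      rw [Finset.sum_eq_single v (fun w _ hw => by simp [hw]) (fun h => absurd hvA h)]
      simp
  | zero => exact ⟨fun _ => 0, by simp⟩
  | add x y hxQ hyQ hx hy =>
      obtain ⟨c₁, h₁⟩ := hx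
      obtain ⟨c₂, h₂⟩ := hy
      refine ⟨c₁ + c₂, ?_⟩
      simp only [Pi.add_apply, add_smul, Finset.sum_add_distrib, h₁, h₂]

lemma sum_nsmul_mem_closure (A : Finset (Fin d → ℤ)) (c : (Fin d → ℤ) → ℕ)
    (t : Finset (Fin d → ℤ)) (ht : t ⊆ A) :
    ∑ v ∈ t, c v • v ∈ AddSubmonoid.closure (A : Set (Fin d → ℤ)) := by
  refine AddSubmonoid.sum_mem _ (fun v hv => ?_)
  exact nsmul_mem (AddSubmonoid.subset_closure (ht hv)) (c v)

lemma castR_apply (v : Fin d → ℤ) (i : Fin d) : castR v i = (v i : ℝ) := rfl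

lemma realCone_add {S : Set (Fin d → ℤ)} {x y : Fin d → ℝ}
    (hx : x ∈ realCone S) (hy : y ∈ realCone S) : x + y ∈ realCone S := by
  classical
  obtain ⟨t₁, c₁, ht₁, hc₁, he₁⟩ := hx
  obtain ⟨t₂, c₂, ht₂, hc₂, he₂⟩ := hy
  refine ⟨t₁ ∪ t₂, fun v => (if v ∈ t₁ then c₁ v else 0) + (if v ∈ t₂ then c₂ v else 0),
    ?_, ?_, ?_⟩
  · intro v hv
    rcases Finset.mem_union.mp hv with h | h
    exacts [ht₁ h, ht₂ h]
  · intro v _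
    have h1 : (0:ℝ) ≤ if v ∈ t₁ then c₁ v else 0 := by
      split_ifs with h; exacts [hc₁ v h, le_refl 0]
    have h2 : (0:ℝ) ≤ if v ∈ t₂ then c₂ v else 0 := by
      split_ifs with h; exacts [hc₂ v h, le_refl 0]
    exact add_nonneg h1 h2
  · have e1 : ∑ v ∈ t₁ ∪ t₂, (if v ∈ t₁ then c₁ v else 0) • castR v
        = ∑ v ∈ t₁, c₁ v • castR v := by
      rw [Finset.sum_congr rfl (fun v _ => ?_), Finset.sum_ite_mem,
        Finset.union_inter_cancel_left]
      split_ifs with h <;> simp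
    have e2 : ∑ v ∈ t₁ ∪ t₂, (if v ∈ t₂ then c₂ v else 0) • castR v
        = ∑ v ∈ t₂, c₂ v • castR v := by
      rw [Finset.sum_congr rfl (fun v _ => ?_), Finset.sum_ite_mem,
        Finset.union_inter_cancel_right]
      split_ifs with h <;> simp
    simp only [add_smul, Finset.sum_add_distrib, e1, e2, he₁, he₂]

lemma castR_mem_realCone {A : Finset (Fin d → ℤ)} {x : Fin d → ℤ}
    (hx : x ∈ AddSubmonoid.closure (A : Set (Fin d → ℤ))) :
    castR x ∈ realCone (A : Set (Fin d → ℤ)) := by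
  obtain ⟨c, hc⟩ := mem_closure_rep hx
  refine ⟨A, fun v => (c v : ℝ), le_refl _, fun v _ => by positivity, ?_⟩
  funext i
  rw [castR_apply, hc]
  push_cast [Finset.sum_apply]
  refine Finset.sum_congr rfl (fun v _ => ?_)
  simp only [Pi.smul_apply, castR_apply, smul_eq_mul, nsmul_eq_mul]
  push_cast
  ring


/-- `X` is a finite union of translates of faces of `Q`. -/
def Good {d : ℕ} (Q : AddSubmonoid (Fin d → ℤ)) (X : Set (Fin d → ℤ)) : Prop :=
  ∃ S : Finset ((Fin d → ℤ) × AddSubmonoid (Fin d → ℤ)),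
    (∀ p ∈ S, IsFace Q p.2) ∧ X = ⋃ p ∈ S, transSet p.1 p.2

variable {d : ℕ} {Q : AddSubmonoid (Fin d → ℤ)}

lemma good_empty : Good Q (∅ : Set (Fin d → ℤ)) :=
  ⟨∅, by simp, by simp⟩

lemma good_union {X Y : Set (Fin d → ℤ)} (hX : Good Q X) (hY : Good Q Y) :
    Good Q (X ∪ Y) := by
  classical
  obtain ⟨S₁, hf₁, he₁⟩ := hX
  obtain ⟨S₂, hf₂, he₂⟩ := hY
  refine ⟨S₁ ∪ S₂, ?_, ?_⟩
  · intro p hp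
    rcases Finset.mem_union.mp hp with h | h
    exacts [hf₁ p h, hf₂ p h]
  · rw [Finset.set_biUnion_union, he₁, he₂]

lemma good_single (a : Fin d → ℤ) (F : AddSubmonoid (Fin d → ℤ)) (hF : IsFace Q F) :
    Good Q (transSet a F) := by
  refine ⟨{(a, F)}, by simpa using hF, by simp⟩

lemma good_vadd {X : Set (Fin d → ℤ)} (v : Fin d → ℤ) (hX : Good Q X) :
    Good Q ((fun x => v + x) '' X) := by
  classical
  obtain ⟨S, hf, he⟩ := hX
  refine ⟨S.image (fun p => (v + p.1, p.2)), ?_, ?_⟩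
  · intro p hp
    obtain ⟨q, hq, rfl⟩ := Finset.mem_image.mp hp
    exact hf q hq
  · subst he
    ext x
    simp only [Set.mem_image, Set.mem_iUnion, Finset.mem_image, transSet,
      Set.mem_setOf_eq, exists_prop]
    constructor
    · rintro ⟨y, ⟨p, hp, f, hf', rfl⟩, rfl⟩
      exact ⟨(v + p.1, p.2), ⟨p, hp, rfl⟩, f, hf', by simp [add_assoc]⟩
    · rintro ⟨p', ⟨p, hp, rfl⟩, f, hf', rfl⟩
      exact ⟨p.1 + f, ⟨p, hp, f, hf', rfl⟩, by simp [add_assoc]⟩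

lemma good_biUnion {ι : Type*} {P : Set ι} (hP : P.Finite)
    {f : ι → Set (Fin d → ℤ)} (h : ∀ p ∈ P, Good Q (f p)) :
    Good Q (⋃ p ∈ P, f p) := by
  classical
  revert h
  refine Set.Finite.induction_on (motive := fun s _ => (∀ p ∈ s, Good Q (f p)) → Good Q (⋃ p ∈ s, f p)) P hP (fun _ => by simpa using (good_empty : Good Q ∅)) ?_
  intro a s _ _ ih h
  rw [Set.biUnion_insert]
  exact good_union (h a (Set.mem_insert a s))
    (ih (fun p hp => h p (Set.mem_insert_of_mem a hp)))


def IsIdealOf {d : ℕ} (Q : AddSubmonoid (Fin d → ℤ)) (J : Set (Fin d → ℤ)) : Prop :=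
  J ⊆ (Q : Set (Fin d → ℤ)) ∧ ∀ x ∈ J, ∀ q ∈ Q, x + q ∈ J

abbrev IdealOf {d : ℕ} (Q : AddSubmonoid (Fin d → ℤ)) :=
  {J : Set (Fin d → ℤ) // IsIdealOf Q J}

lemma wf_ideals (A : Finset (Fin d → ℤ)) :
    WellFounded (fun (J J' : IdealOf (AddSubmonoid.closure (A : Set (Fin d → ℤ)))) =>
      J'.1 ⊂ J.1) := by
  classical
  rw [RelEmbedding.wellFounded_iff_isEmpty]
  constructor
  intro f
  set J : ℕ → Set (Fin d → ℤ) := fun n => (f n).1 with hJ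
  have hssub : ∀ {m n : ℕ}, m < n → J m ⊂ J n := fun {m n} h => f.map_rel_iff.2 h
  have hx : ∀ n, ∃ x, x ∈ J (n+1) ∧ x ∉ J n := fun n =>
    Set.exists_of_ssubset (hssub (Nat.lt_succ_self n))
  choose x hx1 hx2 using hx
  have hxQ : ∀ n, x n ∈ AddSubmonoid.closure (A : Set (Fin d → ℤ)) := fun n =>
    (f (n+1)).2.1 (hx1 n)
  have hrep : ∀ n, ∃ c : (Fin d → ℤ) → ℕ, x n = ∑ v ∈ A, c v • v := fun n =>
    mem_closure_rep (hxQ n)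
  choose c hc using hrep
  have hpwo : @WellQuasiOrdered (↥(A : Finset (Fin d → ℤ)) → ℕ) (· ≤ ·) :=
    wellQuasiOrdered_le
  obtain ⟨m, n, hmn, hle⟩ :=
    hpwo (fun k (v : ↥(A : Finset (Fin d → ℤ))) => c k v)
  have hy : ∑ v ∈ A, (c n v - c m v) • v ∈ AddSubmonoid.closure (A : Set (Fin d → ℤ)) :=
    sum_nsmul_mem_closure A _ A (le_refl _)
  have hsum : x m + (∑ v ∈ A, (c n v - c m v) • v) = x n := by
    rw [hc m, hc n, ← Finset.sum_add_distrib]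
    refine Finset.sum_congr rfl (fun v hv => ?_)
    rw [← add_smul, Nat.add_sub_cancel' (hle ⟨v, hv⟩)]
  have hxmJn : x m ∈ J n := by
    have h1 : m + 1 ≤ n := hmn
    rcases h1.lt_or_eq with h | h
    · exact (hssub h).1 (hx1 m)
    · rw [← h]; exact hx1 m
  have : x n ∈ J n := by
    rw [← hsum]
    exact (f n).2.2 _ hxmJn _ hy
  exact hx2 n this

def colonSet {d : ℕ} (Q : AddSubmonoid (Fin d → ℤ)) (J : Set (Fin d → ℤ))
    (b : Fin d → ℤ) : Set (Fin d → ℤ) :=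
  {q | q ∈ Q ∧ b + q ∈ J}

lemma colon_ideal {J : Set (Fin d → ℤ)} (hJ : IsIdealOf Q J) (b : Fin d → ℤ) :
    IsIdealOf Q (colonSet Q J b) := by
  constructor
  · intro q hq; exact hq.1
  · intro x hx q hq
    exact ⟨Q.add_mem hx.1 hq, by rw [← add_assoc]; exact hJ.2 _ hx.2 q hq⟩

/-- The core decomposition theorem: the complement of an ideal in `Q` is a finite
union of translates of faces of `Q`. -/
theorem good_compl (A : Finset (Fin d → ℤ)) :
    ∀ J : IdealOf (AddSubmonoid.closure (A : Set (Fin d → ℤ))),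
      Good (AddSubmonoid.closure (A : Set (Fin d → ℤ)))
        ((AddSubmonoid.closure (A : Set (Fin d → ℤ)) : Set (Fin d → ℤ)) \ J.1) := by
  classical
  set QA := AddSubmonoid.closure (A : Set (Fin d → ℤ)) with hQA
  intro J
  induction J using (wf_ideals A).induction with
  | _ J IH =>
  by_cases hne : ((QA : Set (Fin d → ℤ)) \ J.1 : Set (Fin d → ℤ)) = ∅
  · rw [hne]; exact good_empty
  obtain ⟨b₀, hb₀⟩ := Set.nonempty_iff_ne_empty.2 hne
  -- pick a maximal colon ideal
  set Fam : Set (IdealOf QA) :=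
    {K | ∃ b, (b ∈ (QA : Set (Fin d → ℤ)) \ J.1) ∧ K.1 = colonSet QA J.1 b} with hFam
  have hFamne : Fam.Nonempty := ⟨⟨colonSet QA J.1 b₀, colon_ideal J.2 b₀⟩, b₀, hb₀, rfl⟩
  obtain ⟨K, ⟨b, hb, hKb⟩, hmax⟩ := (wf_ideals A).has_min Fam hFamne
  have hbQ : b ∈ QA := hb.1
  have hbJ : b ∉ J.1 := hb.2
  -- the maximality argument: the set E is closed under addition
  have key : ∀ x, x ∈ QA → b + x ∉ J.1 → ∀ y, y ∈ QA → b + y ∉ J.1 →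
      b + (x + y) ∉ J.1 := by
    intro x hxQ hbx y hyQ hby hmem
    have hsub : colonSet QA J.1 b ⊆ colonSet QA J.1 (b + x) := by
      rintro q ⟨hq, hbq⟩
      refine ⟨hq, ?_⟩
      rw [add_assoc, add_comm x q, ← add_assoc]
      exact J.2.2 _ hbq x hxQ
    have hmem' : (⟨colonSet QA J.1 (b + x), colon_ideal J.2 _⟩ : IdealOf QA) ∈ Fam :=
      ⟨b + x, ⟨QA.add_mem hbQ hxQ, hbx⟩, rfl⟩
    have heq : colonSet QA J.1 (b + x) = colonSet QA J.1 b := by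
      by_contra hne'
      exact hmax _ hmem'
        (by rw [hKb]; exact HasSubset.Subset.ssubset_of_ne hsub (Ne.symm hne'))
    have hynot : y ∉ colonSet QA J.1 (b + x) := by
      rw [heq]; exact fun h => hby h.2
    exact hynot ⟨hyQ, by rw [add_assoc]; exact hmem⟩
  set E : AddSubmonoid (Fin d → ℤ) :=
    { carrier := {g | g ∈ QA ∧ b + g ∉ J.1}
      zero_mem' := ⟨QA.zero_mem, by simpa using hbJ⟩
      add_mem' := fun {x y} hx hy =>
        ⟨QA.add_mem hx.1 hy.1, key x hx.1 hx.2 y hy.1 hy.2⟩ } with hE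
  have hmemE : ∀ g, g ∈ E ↔ g ∈ QA ∧ b + g ∉ J.1 := fun g => Iff.rfl
  have hEface : IsFace QA E := by
    constructor
    · intro g hg; exact ((hmemE g).1 hg).1
    · intro u v hu hv
      constructor
      · intro huv
        obtain ⟨-, hbuv⟩ := (hmemE _).1 huv
        constructor
        · refine (hmemE u).2 ⟨hu, fun h => hbuv ?_⟩
          have := J.2.2 _ h v hv
          rwa [add_assoc] at this
        · refine (hmemE v).2 ⟨hv, fun h => hbuv ?_⟩
          have := J.2.2 _ h u hu
          rw [add_assoc, add_comm v u] at this
          exact this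
      · rintro ⟨hu', hv'⟩
        exact E.add_mem hu' hv'
  -- the enlarged ideal
  set J' : Set (Fin d → ℤ) := J.1 ∪ transSet b QA with hJ'def
  have hJ' : IsIdealOf QA J' := by
    constructor
    · rintro q (hq | ⟨g, hg, rfl⟩)
      · exact J.2.1 hq
      · exact QA.add_mem hbQ hg
    · rintro q (hq | ⟨g, hg, rfl⟩) r hr
      · exact Or.inl (J.2.2 _ hq r hr)
      · exact Or.inr ⟨g + r, QA.add_mem hg hr, by rw [add_assoc]⟩
  have hlt : J.1 ⊂ J' := by
    refine ⟨Set.subset_union_left, fun hsup => hbJ (hsup ?_)⟩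
    exact Or.inr ⟨0, QA.zero_mem, (add_zero b).symm⟩
  have hIH : Good QA ((QA : Set (Fin d → ℤ)) \ J') := IH ⟨J', hJ'⟩ hlt
  have hdec : ((QA : Set (Fin d → ℤ)) \ J.1 : Set (Fin d → ℤ))
      = transSet b E ∪ ((QA : Set (Fin d → ℤ)) \ J') := by
    ext z
    constructor
    · rintro ⟨hzQ, hzJ⟩
      by_cases hzb : z ∈ transSet b QA
      · obtain ⟨g, hg, rfl⟩ := hzb
        exact Or.inl ⟨g, (hmemE g).2 ⟨hg, hzJ⟩, rfl⟩
      · exact Or.inr ⟨hzQ, fun h => h.elim hzJ hzb⟩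
    · rintro (⟨g, hg, rfl⟩ | ⟨hzQ, hzJ'⟩)
      · obtain ⟨hgQ, hbg⟩ := (hmemE g).1 hg
        exact ⟨QA.add_mem hbQ hgQ, hbg⟩
      · exact ⟨hzQ, fun h => hzJ' (Or.inl h)⟩
  rw [hdec]
  exact good_union (good_single b E hEface) hIH

section Covering

variable (A : Finset (Fin d → ℤ))

def Nbound : ℕ := ∑ v ∈ A, ∑ i, (v i).natAbs

def boxFinset : Finset (Fin d → ℤ) :=
  Finset.Icc (fun _ => -(Nbound A : ℤ)) (fun _ => (Nbound A : ℤ))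

def Pset : Set (Fin d → ℤ) :=
  {p | p ∈ boxFinset A ∧ p ∈ AddSubgroup.closure (A : Set (Fin d → ℤ)) ∧
    castR p ∈ realCone (A : Set (Fin d → ℤ))}

lemma Pset_finite : (Pset A).Finite :=
  Set.Finite.subset (boxFinset A).finite_toSet (fun _ hp => hp.1)

lemma monoid_le_group :
    AddSubmonoid.closure (A : Set (Fin d → ℤ)) ≤
      (AddSubgroup.closure (A : Set (Fin d → ℤ))).toAddSubmonoid :=
  AddSubmonoid.closure_le.2 (fun _ hv => AddSubgroup.subset_closure hv)

lemma exists_cover {x : Fin d → ℤ}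
    (hxG : x ∈ AddSubgroup.closure (A : Set (Fin d → ℤ)))
    (hxC : castR x ∈ realCone (A : Set (Fin d → ℤ))) :
    ∃ p ∈ Pset A, ∃ q ∈ AddSubmonoid.closure (A : Set (Fin d → ℤ)), x = p + q := by
  classical
  obtain ⟨t, c, hts, hc, he⟩ := hxC
  have htA : t ⊆ A := Finset.coe_subset.mp hts
  set q : Fin d → ℤ := ∑ v ∈ t, ⌊c v⌋₊ • v with hq
  have hqQ : q ∈ AddSubmonoid.closure (A : Set (Fin d → ℤ)) :=
    sum_nsmul_mem_closure A _ t htA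
  set p : Fin d → ℤ := x - q with hp
  have hpG : p ∈ AddSubgroup.closure (A : Set (Fin d → ℤ)) :=
    AddSubgroup.sub_mem _ hxG (monoid_le_group A hqQ)
  have hxi : ∀ i, (x i : ℝ) = ∑ v ∈ t, c v * (v i : ℝ) := by
    intro i
    have h := congrFun he i
    rw [castR_apply] at h
    rw [h, Finset.sum_apply]
    exact Finset.sum_congr rfl fun v _ => by
      simp [Pi.smul_apply, castR_apply, smul_eq_mul]
  have hqi : ∀ i, (q i : ℝ) = ∑ v ∈ t, (⌊c v⌋₊ : ℝ) * (v i : ℝ) := by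
    intro i
    have h0 : q i = ∑ v ∈ t, (⌊c v⌋₊ : ℤ) * v i := by
      rw [hq, Finset.sum_apply]
      exact Finset.sum_congr rfl fun v _ => by simp [Pi.smul_apply, nsmul_eq_mul]
    rw [h0]
    push_cast
    ring
  have hpi : ∀ i, (p i : ℝ) = ∑ v ∈ t, (c v - (⌊c v⌋₊ : ℝ)) * (v i : ℝ) := by
    intro i
    have h1 : (p i : ℝ) = (x i : ℝ) - (q i : ℝ) := by
      rw [hp]; push_cast [Pi.sub_apply]; ring
    rw [h1, hxi, hqi, ← Finset.sum_sub_distrib]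
    exact Finset.sum_congr rfl fun v _ => by ring
  have hfnn : ∀ v ∈ t, 0 ≤ c v - (⌊c v⌋₊ : ℝ) := fun v hv =>
    sub_nonneg.2 (Nat.floor_le (hc v hv))
  have hfle : ∀ v ∈ t, c v - (⌊c v⌋₊ : ℝ) ≤ 1 := fun v hv => by
    have := Nat.lt_floor_add_one (c v)
    linarith
  have hpC : castR p ∈ realCone (A : Set (Fin d → ℤ)) := by
    refine ⟨t, fun v => c v - (⌊c v⌋₊ : ℝ), hts, hfnn, ?_⟩
    funext i
    rw [castR_apply, hpi, Finset.sum_apply]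
    exact Finset.sum_congr rfl fun v _ => by
      simp [Pi.smul_apply, castR_apply, smul_eq_mul]
  have hbound : ∀ i, |(p i : ℝ)| ≤ (Nbound A : ℝ) := by
    intro i
    rw [hpi]
    calc |∑ v ∈ t, (c v - (⌊c v⌋₊ : ℝ)) * (v i : ℝ)|
        ≤ ∑ v ∈ t, |(c v - (⌊c v⌋₊ : ℝ)) * (v i : ℝ)| := Finset.abs_sum_le_sum_abs _ _
      _ ≤ ∑ v ∈ t, |(v i : ℝ)| := by
          refine Finset.sum_le_sum fun v hv => ?_
          rw [abs_mul]
          have h1 : |c v - (⌊c v⌋₊ : ℝ)| ≤ 1 :=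
            abs_le.2 ⟨by linarith [hfnn v hv], hfle v hv⟩
          calc |c v - (⌊c v⌋₊ : ℝ)| * |(v i : ℝ)|
              ≤ 1 * |(v i : ℝ)| := mul_le_mul_of_nonneg_right h1 (abs_nonneg _)
            _ = |(v i : ℝ)| := one_mul _
      _ ≤ ∑ v ∈ A, |(v i : ℝ)| :=
          Finset.sum_le_sum_of_subset_of_nonneg htA (fun v _ _ => abs_nonneg _)
      _ ≤ (Nbound A : ℝ) := by
          rw [Nbound]
          push_cast
          refine Finset.sum_le_sum fun v _ => ?_
          have h2 : |(v i : ℝ)| = (((v i).natAbs : ℕ) : ℝ) := by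
            rw [Nat.cast_natAbs, Int.cast_abs]
          rw [h2]
          exact Finset.single_le_sum (f := fun j => (((v j).natAbs : ℕ) : ℝ))
            (fun j _ => by positivity) (Finset.mem_univ i)
  have hpbox : p ∈ boxFinset A := by
    rw [boxFinset, Finset.mem_Icc]
    have habs : ∀ i, |p i| ≤ (Nbound A : ℤ) := fun i => by
      have h := hbound i
      rw [← Int.cast_abs] at h
      exact_mod_cast h
    constructor
    · intro i
      simpa using (abs_le.mp (habs i)).1
    · intro i
      simpa using (abs_le.mp (habs i)).2
  exact ⟨p, ⟨hpbox, hpG, hpC⟩, q, hqQ, (sub_add_cancel x q).symm⟩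

end Covering

end HolesAux

open HolesAux in
theorem holes_are_finite_union_of_translates_of_faces
    {d : ℕ} (A : Finset (Fin d → ℤ)) (h0 : (0 : Fin d → ℤ) ∉ A) :
    ∃ (n : ℕ) (a : Fin n → (Fin d → ℤ)) (Fs : Fin n → AddSubmonoid (Fin d → ℤ)),
      (∀ i, IsFace (AddSubmonoid.closure (A : Set (Fin d → ℤ))) (Fs i)) ∧
      -- the set of holes (ℤQ ∩ ℝ₊Q) \ Q
      {v : Fin d → ℤ | v ∈ AddSubgroup.closure (A : Set (Fin d → ℤ)) ∧
          castR v ∈ realCone (A : Set (Fin d → ℤ)) ∧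
          v ∉ AddSubmonoid.closure (A : Set (Fin d → ℤ))}
        = ⋃ i, transSet (a i) (Fs i) := by
  classical
  set QA := AddSubmonoid.closure (A : Set (Fin d → ℤ)) with hQAdef
  have hQAideal : IsIdealOf QA (QA : Set (Fin d → ℤ)) :=
    ⟨fun _ h => h, fun x hx q hq => QA.add_mem hx hq⟩
  have hgood : Good QA {v : Fin d → ℤ | v ∈ AddSubgroup.closure (A : Set (Fin d → ℤ)) ∧
      castR v ∈ realCone (A : Set (Fin d → ℤ)) ∧ v ∉ QA} := by
    have hH : {v : Fin d → ℤ | v ∈ AddSubgroup.closure (A : Set (Fin d → ℤ)) ∧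
        castR v ∈ realCone (A : Set (Fin d → ℤ)) ∧ v ∉ QA}
        = ⋃ p ∈ Pset A, ((fun x => p + x) ''
            ((QA : Set (Fin d → ℤ)) \ colonSet QA (QA : Set (Fin d → ℤ)) p)) := by
      ext x
      simp only [Set.mem_setOf_eq, Set.mem_iUnion, Set.mem_image, exists_prop]
      constructor
      · rintro ⟨hxG, hxC, hxQ⟩
        obtain ⟨p, hp, q, hq, rfl⟩ := exists_cover A hxG hxC
        exact ⟨p, hp, q, ⟨hq, fun hcol => hxQ hcol.2⟩, rfl⟩
      · rintro ⟨p, hp, q, ⟨hqQ, hqcol⟩, rfl⟩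
        have hpq : p + q ∉ QA := fun h => hqcol ⟨hqQ, h⟩
        refine ⟨AddSubgroup.add_mem _ hp.2.1 (monoid_le_group A hqQ), ?_, hpq⟩
        have hcast : castR (p + q) = castR p + castR q := by
          funext i
          simp only [castR_apply, Pi.add_apply]
          push_cast
          ring
        rw [hcast]
        exact realCone_add hp.2.2 (castR_mem_realCone hqQ)
    rw [hH]
    refine good_biUnion (Pset_finite A) (fun p hp => ?_)
    exact good_vadd p
      (good_compl A ⟨colonSet QA (QA : Set (Fin d → ℤ)) p, colon_ideal hQAideal p⟩)
  obtain ⟨S, hfaces, hEq⟩ := hgood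
  refine ⟨S.card, fun i => ((S.equivFin.symm i) : (Fin d → ℤ) × AddSubmonoid (Fin d → ℤ)).1,
    fun i => ((S.equivFin.symm i) : (Fin d → ℤ) × AddSubmonoid (Fin d → ℤ)).2,
    fun i => hfaces _ (S.equivFin.symm i).2, ?_⟩
  rw [hEq]
  ext x
  simp only [Set.mem_iUnion]
  constructor
  · rintro ⟨p, hpS, hx⟩
    refine ⟨S.equivFin ⟨p, hpS⟩, ?_⟩
    have hsy : S.equivFin.symm (S.equivFin ⟨p, hpS⟩) = ⟨p, hpS⟩ :=
      Equiv.symm_apply_apply _ _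
    rw [hsy]
    exact hx
  · rintro ⟨i, hx⟩
    exact ⟨(S.equivFin.symm i).1, (S.equivFin.symm i).2, hx⟩

end
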